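/- Let α ∈ (0, 1/√2) and let f : [0,∞) → ℝ be continuous with f(∞) = 1. Suppose g is a C² solution on (0,∞) of g'' + (1/r) g' = [α² + (1/2)(f² + g² - 1)] g with g(r) > 0 and g'(r) < 0 for all r > 0, and g bounded. Then g(r) → 0 as r → ∞. -/

import Mathlib

open Filter Set

/-- If `α ∈ (0, 1/√2)`, `f → 1` at infinity, and `g` is a bounded C² solution on
`(0,∞)` of `g'' + (1/r) g' = [α² + (1/2)(f² + g² - 1)] g` with `g > 0` and
`g' < 0` everywhere, then `g → 0` at infinity. -/
theorem stmt19 (α : ℝ) (hα : α ∈ Ioo (0:ℝ) (1 / Real.sqrt 2)) (f g : ℝ → ℝ)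
    (hf : ContinuousOn f (Ici 0)) (hflim : Tendsto f atTop (nhds 1))
    (hg2 : ContDiffOn ℝ 2 g (Ioi 0))
    (hode : ∀ r ∈ Ioi (0:ℝ),
      deriv (deriv g) r + (1 / r) * deriv g r =
        (α ^ 2 + (1 / 2) * ((f r) ^ 2 + (g r) ^ 2 - 1)) * g r)
    (hpos : ∀ r ∈ Ioi (0:ℝ), 0 < g r)
    (hneg : ∀ r ∈ Ioi (0:ℝ), deriv g r < 0)
    (hbd : ∃ C : ℝ, ∀ r ∈ Ioi (0:ℝ), g r ≤ C) :
    Tendsto g atTop (nhds 0) := by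
  have hgd : DifferentiableOn ℝ g (Ioi 0) := hg2.differentiableOn (by norm_num)
  -- g is strictly decreasing on (0,∞)
  have hanti : StrictAntiOn g (Ioi 0) := by
    apply strictAntiOn_of_deriv_neg (convex_Ioi 0) hgd.continuousOn
    rw [interior_Ioi]; exact hneg
  -- auxiliary globally antitone function
  set h : ℝ → ℝ := fun r => g (max r 1) with hh
  have hmem : ∀ r : ℝ, max r 1 ∈ Ioi (0:ℝ) := fun r =>
    lt_of_lt_of_le one_pos (le_max_right r 1)
  have hantih : Antitone h := by
    intro a b hab
    exact hanti.antitoneOn (hmem a) (hmem b) (max_le_max hab le_rfl)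
  have hbdd : BddBelow (Set.range h) := by
    refine ⟨0, ?_⟩
    rintro x ⟨r, rfl⟩
    exact (hpos _ (hmem r)).le
  have hhl : Tendsto h atTop (nhds (⨅ r, h r)) := tendsto_atTop_ciInf hantih hbdd
  set l : ℝ := ⨅ r, h r with hldef
  have heq : h =ᶠ[atTop] g := by
    filter_upwards [eventually_ge_atTop (1:ℝ)] with r hr
    simp [hh, max_eq_left hr]
  have hgl : Tendsto g atTop (nhds l) := hhl.congr' heq
  have hl0 : 0 ≤ l := by
    refine ge_of_tendsto hgl ?_
    filter_upwards [eventually_gt_atTop (0:ℝ)] with r hr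
    exact (hpos r hr).le
  -- g r ≥ l for all r > 0
  have hge : ∀ r ∈ Ioi (0:ℝ), l ≤ g r := by
    intro r hr
    refine le_of_tendsto hgl ?_
    filter_upwards [eventually_ge_atTop r] with s hs
    exact hanti.antitoneOn hr (lt_of_lt_of_le hr hs) hs
  -- it suffices to show l = 0
  rcases eq_or_lt_of_le hl0 with hl | hl
  · rw [← hl] at hgl; exact hgl
  exfalso
  -- eventually f r ^ 2 > 1 - l²/2
  have hf2 : Tendsto (fun r => f r ^ 2) atTop (nhds 1) := by
    have := hflim.pow 2
    simpa using this
  have hev : ∀ᶠ r in atTop, 1 - l ^ 2 / 2 < f r ^ 2 :=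
    hf2.eventually (eventually_gt_nhds (by nlinarith))
  obtain ⟨R, hR⟩ := hev.exists_forall_of_atTop
  set R0 : ℝ := max R 1 with hR0def
  have hR0pos : (0:ℝ) < R0 := lt_of_lt_of_le one_pos (le_max_right R 1)
  set c : ℝ := (α ^ 2 + l ^ 2 / 4) * l with hcdef
  have hc : 0 < c := by
    apply mul_pos _ hl
    nlinarith [sq_nonneg α]
  -- deriv g is C¹ on (0,∞)
  have hdg : ContDiffOn ℝ 1 (deriv g) (Ioi 0) := by
    have : ContDiffOn ℝ (2 - 1) (deriv g) (Ioi 0) :=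
      hg2.deriv_of_isOpen isOpen_Ioi (le_of_eq rfl)
    exact hg2.deriv_of_isOpen isOpen_Ioi (by norm_num)
  have hdgd : DifferentiableOn ℝ (deriv g) (Ioi 0) := hdg.differentiableOn one_ne_zero
  -- key lower bound on second derivative
  have hkey : ∀ r, R0 ≤ r → c ≤ deriv (deriv g) r := by
    intro r hr
    have hrpos : (0:ℝ) < r := lt_of_lt_of_le hR0pos hr
    have hrmem : r ∈ Ioi (0:ℝ) := hrpos
    have hf2r : 1 - l ^ 2 / 2 < f r ^ 2 := hR r (le_trans (le_max_left R 1) hr)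
    have hgr : l ≤ g r := hge r hrmem
    have hA : α ^ 2 + l ^ 2 / 4 ≤ α ^ 2 + (1 / 2) * (f r ^ 2 + g r ^ 2 - 1) := by
      nlinarith
    have hrhs : c ≤ (α ^ 2 + (1 / 2) * (f r ^ 2 + g r ^ 2 - 1)) * g r := by
      have := mul_le_mul hA hgr hl.le (le_trans (by nlinarith [sq_nonneg α]) hA)
      linarith [this]
    have hode' := hode r hrmem
    have hterm : (1 / r) * deriv g r < 0 :=
      mul_neg_of_pos_of_neg (one_div_pos.mpr hrpos) (hneg r hrmem)
    linarith
  -- ψ r = deriv g r - c * r is monotone on [R0, ∞)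
  set ψ : ℝ → ℝ := fun r => deriv g r - c * r with hψ
  have hsub : Ici R0 ⊆ Ioi (0:ℝ) := fun x hx => lt_of_lt_of_le hR0pos hx
  have hmono : MonotoneOn ψ (Ici R0) := by
    apply monotoneOn_of_deriv_nonneg (convex_Ici R0)
    · exact ((hdg.continuousOn.mono hsub).sub
        ((continuous_const.mul continuous_id).continuousOn))
    · rw [interior_Ici]
      intro x hx
      have hxpos : (0:ℝ) < x := lt_trans hR0pos hx
      exact ((hdgd.differentiableAt (isOpen_Ioi.mem_nhds hxpos)).sub
        ((differentiableAt_const c).mul differentiableAt_id)).differentiableWithinAt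
    · rw [interior_Ici]
      intro x hx
      have hxpos : (0:ℝ) < x := lt_trans hR0pos hx
      have hd : DifferentiableAt ℝ (deriv g) x :=
        hdgd.differentiableAt (isOpen_Ioi.mem_nhds hxpos)
      have h2 : HasDerivAt (fun r : ℝ => c * r) c x := by
        simpa using (hasDerivAt_id x).const_mul c
      have : deriv ψ x = deriv (deriv g) x - c := by
        rw [hψ, deriv_fun_sub hd h2.differentiableAt, h2.deriv]
      rw [this]
      have := hkey x hx.le
      linarith
  -- derive a contradiction at a far point
  set r1 : ℝ := R0 + (1 - deriv g R0) / c with hr1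
  have hdR0 : deriv g R0 < 0 := hneg R0 hR0pos
  have hfrac : 0 < (1 - deriv g R0) / c := div_pos (by linarith) hc
  have hr1ge : R0 ≤ r1 := by rw [hr1]; linarith
  have := hmono (self_mem_Ici) (mem_Ici.mpr hr1ge) hr1ge
  have hcalc : c * r1 - c * R0 = 1 - deriv g R0 := by
    rw [hr1]
    field_simp
    ring
  have hr1neg : deriv g r1 < 0 := hneg r1 (lt_of_lt_of_le hR0pos hr1ge)
  simp only [hψ] at this
  linarith
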